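/- Consider a finite POMP with |𝒳| = n states, transition matrix T, and one-step observation matrix A whose j-th row is the distribution of Y given X = a_j. If the n × nK matrix M = [A, TA, T²A, …, T^{n−1}A] has rank n, then the system is n-step observable: every function f : 𝒳 → ℝ can be written as f(x) = ∫ g(y_{[1,n]}) P(dy_{[1,n]}|X₁ = x) for some bounded g of the additively separable form g(y_{[1,n]}) = Σ_i g_i(y_i). Moreover, appending further blocks T^k A for k ≥ n does not increase the rank of M. -/

import Mathlib

open Finset

lemma pow_mem_span {n : ℕ} (hn : 0 < n) (T : Matrix (Fin n) (Fin n) ℝ) :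
    ∀ k, T ^ k ∈ Submodule.span ℝ (Set.range fun i : Fin n => T ^ (i : ℕ)) := by
  set V := Submodule.span ℝ (Set.range fun i : Fin n => T ^ (i : ℕ)) with hV
  have hgen : ∀ i : ℕ, i < n → T ^ i ∈ V := fun i hi => Submodule.subset_span ⟨⟨i, hi⟩, rfl⟩
  have hdeg : T.charpoly.natDegree = n := by
    rw [Matrix.charpoly_natDegree_eq_dim, Fintype.card_fin]
  have hCH : T ^ n ∈ V := by
    have h0 := T.aeval_self_charpoly
    rw [Polynomial.aeval_eq_sum_range' (n := n + 1) (by omega : T.charpoly.natDegree < n + 1)] at h0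
    rw [Finset.sum_range_succ] at h0
    have hlead : T.charpoly.coeff n = 1 := by
      have := T.charpoly_monic.coeff_natDegree
      rwa [hdeg] at this
    rw [hlead, one_smul] at h0
    have hT : T ^ n = -∑ i ∈ Finset.range n, T.charpoly.coeff i • T ^ i :=
      eq_neg_of_add_eq_zero_right h0
    rw [hT]
    exact neg_mem (Submodule.sum_mem _ fun i hi =>
      Submodule.smul_mem _ _ (hgen i (Finset.mem_range.1 hi)))
  have hmul : ∀ M, M ∈ V → M * T ∈ V := by
    intro M hM
    induction hM using Submodule.span_induction with
    | mem x hx =>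
      obtain ⟨i, rfl⟩ := hx
      show T ^ (i : ℕ) * T ∈ V
      rw [← pow_succ]
      rcases lt_or_eq_of_le (Nat.succ_le_of_lt i.2) with h | h
      · exact hgen _ h
      · have : (i : ℕ) + 1 = n := h
        rw [this]; exact hCH
    | zero => simp only [zero_mul]; exact zero_mem V
    | add x y _ _ hx hy => rw [add_mul]; exact add_mem hx hy
    | smul c x _ hx => rw [smul_mul_assoc]; exact Submodule.smul_mem _ _ hx
  intro k
  induction k with
  | zero => exact hgen 0 hn
  | succ k ih => rw [pow_succ]; exact hmul _ ih

lemma massSum {n : ℕ} (T : Matrix (Fin n) (Fin n) ℝ) (hTrow : ∀ i, ∑ j, T i j = 1) :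
    ∀ (m : ℕ) (x : Fin n),
      ∑ p : Fin (m + 1) → Fin n,
        (if p 0 = x then (1 : ℝ) else 0) *
          ∏ j : Fin m, T (p j.castSucc) (p j.succ) = 1 := by
  intro m
  induction m with
  | zero =>
    intro x
    rw [← (Equiv.funUnique (Fin 1) (Fin n)).symm.sum_comp]
    simp
  | succ m ih =>
    intro x
    rw [← ((Fin.consEquiv fun _ => Fin n).sum_comp _)]
    rw [Fintype.sum_prod_type]
    have hterm : ∀ (x0 : Fin n) (q : Fin (m + 1) → Fin n),
        (if (Fin.consEquiv fun _ => Fin n) (x0, q) 0 = x then (1 : ℝ) else 0) *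
            ∏ j : Fin (m + 1), T ((Fin.consEquiv fun _ => Fin n) (x0, q) j.castSucc)
              ((Fin.consEquiv fun _ => Fin n) (x0, q) j.succ)
          = (if x0 = x then (1 : ℝ) else 0) *
              (T x0 (q 0) * ∏ j : Fin m, T (q j.castSucc) (q j.succ)) := by
      intro x0 q
      simp [Fin.prod_univ_succ, ← Fin.succ_castSucc]
    rw [Finset.sum_congr rfl fun x0 _ => Finset.sum_congr rfl fun q _ => hterm x0 q]
    rw [Finset.sum_eq_single x]
    · simp only [if_pos rfl, if_true, one_mul]
      have hdel : ∀ q : Fin (m + 1) → Fin n,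
          T x (q 0) * ∏ j : Fin m, T (q j.castSucc) (q j.succ)
            = ∑ z, T x z * ((if q 0 = z then (1 : ℝ) else 0) * ∏ j : Fin m, T (q j.castSucc) (q j.succ)) := by
        intro q
        rw [Finset.sum_eq_single (q 0)]
        · simp
        · intro z _ hz; simp [if_neg (Ne.symm hz)]
        · simp
      rw [Finset.sum_congr rfl fun q _ => hdel q, Finset.sum_comm]
      have hz : ∀ z : Fin n,
          (∑ q : Fin (m + 1) → Fin n,
            T x z * ((if q 0 = z then (1 : ℝ) else 0) * ∏ j : Fin m, T (q j.castSucc) (q j.succ))) = T x z := by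
        intro z
        rw [← Finset.mul_sum, ih z, mul_one]
      rw [Finset.sum_congr rfl fun z _ => hz z, hTrow x]
    · intro z _ hz
      simp [if_neg hz]
    · simp

lemma pathSum {n : ℕ} (T : Matrix (Fin n) (Fin n) ℝ) (hTrow : ∀ i, ∑ j, T i j = 1) :
    ∀ (i m : ℕ) (hi : i ≤ m) (h : Fin n → ℝ) (x : Fin n),
      ∑ p : Fin (m + 1) → Fin n,
        (if p 0 = x then (1 : ℝ) else 0) *
            (∏ j : Fin m, T (p j.castSucc) (p j.succ)) * h (p ⟨i, Nat.lt_succ_of_le hi⟩)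
        = (T ^ i).mulVec h x := by
  intro i
  induction i with
  | zero =>
    intro m hi h x
    have h0 : (⟨0, Nat.lt_succ_of_le hi⟩ : Fin (m + 1)) = 0 := by
      ext; simp
    rw [h0]
    have hterm : ∀ p : Fin (m + 1) → Fin n,
        (if p 0 = x then (1 : ℝ) else 0) * (∏ j : Fin m, T (p j.castSucc) (p j.succ)) * h (p 0)
          = (if p 0 = x then (1 : ℝ) else 0) * (∏ j : Fin m, T (p j.castSucc) (p j.succ)) * h x := by
      intro p
      by_cases hp : p 0 = x
      · rw [hp]
      · simp [hp]
    rw [Finset.sum_congr rfl fun p _ => hterm p, ← Finset.sum_mul, massSum T hTrow m x, one_mul,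
      pow_zero, Matrix.one_mulVec]
  | succ i ih =>
    intro m hi h x
    obtain ⟨m', rfl⟩ : ∃ m', m = m' + 1 := ⟨m - 1, by omega⟩
    rw [← ((Fin.consEquiv fun _ => Fin n).sum_comp _)]
    rw [Fintype.sum_prod_type]
    have hi' : i ≤ m' := by omega
    have hterm : ∀ (x0 : Fin n) (q : Fin (m' + 1) → Fin n),
        (if (Fin.consEquiv fun _ => Fin n) (x0, q) 0 = x then (1 : ℝ) else 0) *
              (∏ j : Fin (m' + 1), T ((Fin.consEquiv fun _ => Fin n) (x0, q) j.castSucc)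
                ((Fin.consEquiv fun _ => Fin n) (x0, q) j.succ)) *
            h ((Fin.consEquiv fun _ => Fin n) (x0, q) ⟨i + 1, Nat.lt_succ_of_le hi⟩)
          = (if x0 = x then (1 : ℝ) else 0) *
              (T x0 (q 0) * ((∏ j : Fin m', T (q j.castSucc) (q j.succ)) *
                h (q ⟨i, Nat.lt_succ_of_le hi'⟩))) := by
      intro x0 q
      have hsucc : (⟨i + 1, Nat.lt_succ_of_le hi⟩ : Fin (m' + 1 + 1))
          = Fin.succ ⟨i, Nat.lt_succ_of_le hi'⟩ := rfl
      simp only [Fin.consEquiv_apply]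
      rw [hsucc, Fin.cons_succ]
      simp only [Fin.prod_univ_succ, Fin.cons_succ, Fin.castSucc_zero, Fin.cons_zero,
        ← Fin.succ_castSucc]
      ring
    rw [Finset.sum_congr rfl fun x0 _ => Finset.sum_congr rfl fun q _ => hterm x0 q]
    rw [Finset.sum_eq_single x]
    · simp only [if_pos rfl, if_true, one_mul]
      have hdel : ∀ q : Fin (m' + 1) → Fin n,
          T x (q 0) * ((∏ j : Fin m', T (q j.castSucc) (q j.succ)) * h (q ⟨i, Nat.lt_succ_of_le hi'⟩))
            = ∑ z, T x z * ((if q 0 = z then (1 : ℝ) else 0) *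
                (∏ j : Fin m', T (q j.castSucc) (q j.succ)) * h (q ⟨i, Nat.lt_succ_of_le hi'⟩)) := by
        intro q
        rw [Finset.sum_eq_single (q 0)]
        · simp [mul_assoc]
        · intro z _ hz; simp [if_neg (Ne.symm hz)]
        · simp
      rw [Finset.sum_congr rfl fun q _ => hdel q, Finset.sum_comm]
      have hz : ∀ z : Fin n,
          (∑ q : Fin (m' + 1) → Fin n, T x z * ((if q 0 = z then (1 : ℝ) else 0) *
              (∏ j : Fin m', T (q j.castSucc) (q j.succ)) * h (q ⟨i, Nat.lt_succ_of_le hi'⟩)))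
            = T x z * (T ^ i).mulVec h z := by
        intro z
        rw [← Finset.mul_sum, ih m' hi' h z]
      rw [Finset.sum_congr rfl fun z _ => hz z]
      rw [pow_succ', ← Matrix.mulVec_mulVec]
      simp [Matrix.mulVec, dotProduct]
    · intro z _ hz; simp [if_neg hz]
    · simp


/-- The matrix `[A, TA, T²A, …, T^{m-1}A]` of marginal observation distributions,
as an `s × (m K)` matrix. -/
noncomputable def bigM {s K : ℕ} (T : Matrix (Fin s) (Fin s) ℝ)
    (A : Matrix (Fin s) (Fin K) ℝ) (m : ℕ) : Matrix (Fin s) (Fin m × Fin K) ℝ :=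
  Matrix.of fun i p => ((T ^ (p.1 : ℕ)) * A) i p.2

/-- The joint law of the observations `Y₁, …, Y_s` given `X₁ = x`, for the POMP with transition
matrix `T` and observation matrix `A`: a sum over state paths starting at `x`. -/
noncomputable def jointObs {s K : ℕ} (hs : 0 < s) (T : Matrix (Fin s) (Fin s) ℝ)
    (A : Matrix (Fin s) (Fin K) ℝ) (x : Fin s) (y : Fin s → Fin K) : ℝ :=
  ∑ p : Fin s → Fin s,
    (if p ⟨0, hs⟩ = x then (1 : ℝ) else 0) *
      (∏ i : Fin s, A (p i) (y i)) *
      (∏ i : Fin (s - 1),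
        T (p (Fin.castLE (Nat.sub_le s 1) i)) (p ⟨i.1 + 1, by have := i.2; omega⟩))

/-- For a finite POMP with `s` states, transition matrix `T` and observation
matrix `A` (both row-stochastic): if `M = [A, TA, …, T^{s-1}A]` has rank `s`, then the system is
`s`-step observable with additively separable `g`; moreover appending further blocks `T^k A`
never increases the rank of `M` (Cayley–Hamilton). -/
theorem finite_state_observability
    {s K : ℕ} (hs : 0 < s)
    (T : Matrix (Fin s) (Fin s) ℝ) (A : Matrix (Fin s) (Fin K) ℝ)
    (hTpos : ∀ i j, 0 ≤ T i j) (hApos : ∀ i k, 0 ≤ A i k)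
    (hTrow : ∀ i, ∑ j, T i j = 1) (hArow : ∀ i, ∑ k, A i k = 1) :
    ((bigM T A s).rank = s →
      ∀ f : Fin s → ℝ, ∃ gi : Fin s → Fin K → ℝ,
        ∀ x : Fin s,
          f x = ∑ y : Fin s → Fin K, (∑ i, gi i (y i)) * jointObs hs T A x y) ∧
    (∀ m : ℕ, s ≤ m → (bigM T A m).rank = (bigM T A s).rank) := by
  constructor
  · intro hrank f
    obtain ⟨m, hm⟩ : ∃ m, s = m + 1 := ⟨s - 1, by omega⟩
    subst hm
    have hrange : LinearMap.range (bigM T A (m + 1)).mulVecLin = ⊤ := by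
      apply Submodule.eq_top_of_finrank_eq
      rw [Matrix.rank] at hrank
      rw [hrank, Module.finrank_fintype_fun_eq_card, Fintype.card_fin]
    obtain ⟨v, hv⟩ : f ∈ LinearMap.range (bigM T A (m + 1)).mulVecLin :=
      hrange ▸ Submodule.mem_top
    have hv' : (bigM T A (m + 1)).mulVec v = f := by rwa [Matrix.mulVecLin_apply] at hv
    refine ⟨fun i k => v (i, k), fun x => ?_⟩
    have hJ : ∀ y : Fin (m + 1) → Fin K, jointObs hs T A x y
        = ∑ p : Fin (m + 1) → Fin (m + 1),
            (if p 0 = x then (1 : ℝ) else 0) * (∏ j, A (p j) (y j)) *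
              (∏ j : Fin m, T (p j.castSucc) (p j.succ)) := fun y => rfl
    have inner : ∀ (i : Fin (m + 1)) (p : Fin (m + 1) → Fin (m + 1)),
        ∑ y : Fin (m + 1) → Fin K, v (i, y i) * ∏ j, A (p j) (y j)
          = ∑ k, A (p i) k * v (i, k) := by
      intro i p
      have e1 : ∀ y : Fin (m + 1) → Fin K,
          v (i, y i) * ∏ j, A (p j) (y j)
            = ∏ j, (A (p j) (y j) * if i = j then v (i, y j) else 1) := by
        intro y
        rw [Finset.prod_mul_distrib, Finset.prod_ite_eq]
        simp [mul_comm]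
      rw [Finset.sum_congr rfl fun y _ => e1 y,
        show (∑ y : Fin (m + 1) → Fin K, ∏ j, (A (p j) (y j) * if i = j then v (i, y j) else 1))
            = ∏ j, ∑ k, (A (p j) k * if i = j then v (i, k) else 1) from
          (Fintype.prod_sum fun j k => A (p j) k * if i = j then v (i, k) else 1).symm]
      have e2 : ∀ j, (∑ k, A (p j) k * if i = j then v (i, k) else 1)
          = if i = j then ∑ k, A (p i) k * v (i, k) else 1 := by
        intro j
        by_cases hj : i = j
        · subst hj; simp
        · simp [hj, hArow]
      rw [Finset.prod_congr rfl fun j _ => e2 j, Finset.prod_ite_eq]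
      simp
    have marg : ∀ i : Fin (m + 1),
        ∑ y : Fin (m + 1) → Fin K, v (i, y i) * jointObs hs T A x y
          = ∑ k, ((T ^ (i : ℕ)) * A) x k * v (i, k) := by
      intro i
      rw [Finset.sum_congr rfl fun y _ => by rw [hJ y]]
      simp_rw [Finset.mul_sum]
      rw [Finset.sum_comm]
      have e3 : ∀ p : Fin (m + 1) → Fin (m + 1),
          (∑ y : Fin (m + 1) → Fin K, v (i, y i) *
            ((if p 0 = x then (1 : ℝ) else 0) * (∏ j, A (p j) (y j)) *
              (∏ j : Fin m, T (p j.castSucc) (p j.succ))))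
            = (if p 0 = x then (1 : ℝ) else 0) *
                (∏ j : Fin m, T (p j.castSucc) (p j.succ)) *
                (∑ k, A (p i) k * v (i, k)) := by
        intro p
        rw [← inner i p, Finset.mul_sum]
        exact Finset.sum_congr rfl fun y _ => by ring
      rw [Finset.sum_congr rfl fun p _ => e3 p]
      calc ∑ p : Fin (m + 1) → Fin (m + 1),
            (if p 0 = x then (1 : ℝ) else 0) *
              (∏ j : Fin m, T (p j.castSucc) (p j.succ)) *
              (∑ k, A (p i) k * v (i, k))
          = (T ^ (i : ℕ)).mulVec (fun z => ∑ k, A z k * v (i, k)) x :=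
            pathSum T hTrow (i : ℕ) m (by omega) (fun z => ∑ k, A z k * v (i, k)) x
        _ = ∑ k, ((T ^ (i : ℕ)) * A) x k * v (i, k) := by
            simp only [Matrix.mulVec, dotProduct, Matrix.mul_apply,
              Finset.mul_sum, Finset.sum_mul]
            rw [Finset.sum_comm]
            exact Finset.sum_congr rfl fun k _ => Finset.sum_congr rfl fun z _ => by ring
    symm
    calc ∑ y : Fin (m + 1) → Fin K, (∑ i, v (i, y i)) * jointObs hs T A x y
        = ∑ y : Fin (m + 1) → Fin K, ∑ i, v (i, y i) * jointObs hs T A x y :=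
          Finset.sum_congr rfl fun y _ => Finset.sum_mul _ _ _
      _ = ∑ i : Fin (m + 1), ∑ y : Fin (m + 1) → Fin K, v (i, y i) * jointObs hs T A x y :=
          Finset.sum_comm
      _ = ∑ i : Fin (m + 1), ∑ k, ((T ^ (i : ℕ)) * A) x k * v (i, k) :=
          Finset.sum_congr rfl fun i _ => marg i
      _ = ∑ q : Fin (m + 1) × Fin K, bigM T A (m + 1) x q * v q := by
          rw [Fintype.sum_prod_type]; rfl
      _ = f x := by rw [← hv']; simp [Matrix.mulVec, dotProduct]
  · intro mm hmm
    have hspan : Submodule.span ℝ (Set.range (bigM T A mm).transpose)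
        = Submodule.span ℝ (Set.range (bigM T A s).transpose) := by
      apply le_antisymm
      · rw [Submodule.span_le]
        rintro _ ⟨⟨j, k⟩, rfl⟩
        obtain ⟨c, hc⟩ := (Submodule.mem_span_range_iff_exists_fun ℝ).1 (pow_mem_span hs T (j : ℕ))
        have hTA : (T ^ (j : ℕ)) * A = ∑ i : Fin s, c i • ((T ^ (i : ℕ)) * A) := by
          rw [← hc, Matrix.sum_mul]
          exact Finset.sum_congr rfl fun i _ => Matrix.smul_mul _ _ _
        have hcol : (bigM T A mm).transpose (j, k) = ∑ i : Fin s, c i • (bigM T A s).transpose (i, k) := by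
          funext z
          have h := congrFun (congrFun hTA z) k
          simpa [bigM, Matrix.sum_apply, Finset.sum_apply, Pi.smul_apply] using h
        rw [SetLike.mem_coe, hcol]
        exact Submodule.sum_mem _ fun i _ =>
          Submodule.smul_mem _ _ (Submodule.subset_span ⟨(i, k), rfl⟩)
      · rw [Submodule.span_le]
        rintro _ ⟨⟨j, k⟩, rfl⟩
        exact Submodule.subset_span ⟨(⟨j.1, by omega⟩, k), rfl⟩
    rw [Matrix.rank_eq_finrank_span_cols, Matrix.rank_eq_finrank_span_cols]
    exact congrArg (fun S : Submodule ℝ (Fin s → ℝ) => Module.finrank ℝ S) hspan
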